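/- Let h ⊂ gl(V) be a matrix realization of the Heisenberg Lie algebra h_{2n+1} = w ⊕ ℂt (with [w,w] = ℂt central), let m be the two-sided ideal generated by h in the algebra A = ℂ·1 ⊕ m it generates in End(V), and suppose t·m = m·t = 0 and V is a cyclic A-module with cyclic vector o (A·o = V). If S₁,…,S_k is a basis of ker(ev : A → V, S ↦ S·o) and S_i = X_i + Y_i with X_i ∈ w, Y_i ∈ m², then X₁,…,X_k are linearly independent, pairwise commuting elements of w; consequently k ≤ n and dim A ≤ 3n+2. -/

import Mathlib

open Matrix

/-- `m²`: the span of products of two elements of `m`. -/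
noncomputable def sqIdeal {N : ℕ} (m : Submodule ℂ (Matrix (Fin N) (Fin N) ℂ)) :
    Submodule ℂ (Matrix (Fin N) (Fin N) ℂ) :=
  Submodule.span ℂ {a | ∃ x ∈ m, ∃ y ∈ m, a = x * y}

set_option maxHeartbeats 2000000 in
/-- For a matrix realization `h = w ⊕ ℂt` of the Heisenberg Lie
algebra in `End(V)`, `V = ℂ^{2n+2}`, generating a local algebra `A = ℂ·1 ⊕ m`
with `t·m = m·t = 0` and a cyclic vector `o`, if `S₁,…,S_k` is a basis of
`ker(ev)` and `S_i = X_i + Y_i` with `X_i ∈ w`, `Y_i ∈ m²`, then the `X_i` are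
linearly independent and pairwise commuting elements of `w`; consequently
`k ≤ n` and `dim A ≤ 3n+2`. -/
theorem ker_ev_abelian_and_dim_bound
    (n k : ℕ)
    (A : Subalgebra ℂ (Matrix (Fin (2 * n + 2)) (Fin (2 * n + 2)) ℂ))
    (m w : Submodule ℂ (Matrix (Fin (2 * n + 2)) (Fin (2 * n + 2)) ℂ))
    (t : Matrix (Fin (2 * n + 2)) (Fin (2 * n + 2)) ℂ)
    (o : Fin (2 * n + 2) → ℂ)
    -- A is generated by the Heisenberg Lie algebra h = w ⊕ ℂt
    (hAgen : A = Algebra.adjoin ℂ ((w : Set (Matrix (Fin (2 * n + 2)) (Fin (2 * n + 2)) ℂ)) ∪ {t}))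
    -- A = ℂ·1 ⊕ m, m the maximal ideal
    (hmA : ∀ x ∈ m, x ∈ A)
    (hdec : ∀ a ∈ A, ∃ c : ℂ, a - c • (1 : Matrix (Fin (2 * n + 2)) (Fin (2 * n + 2)) ℂ) ∈ m)
    -- the Heisenberg structure: h = w ⊕ ℂt, [w,w] = ℂt non-degenerate, t central
    (hwm : w ≤ m) (htm : t ∈ m)
    (hwdim : Module.finrank ℂ ↥w = 2 * n)
    (hbr : ∀ x ∈ w, ∀ y ∈ w, ∃ c : ℂ, x * y - y * x = c • t)
    (hnd : ∀ x ∈ w, (∀ y ∈ w, x * y - y * x = 0) → x = 0)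
    (ht : ∀ x ∈ m, t * x = 0 ∧ x * t = 0)
    -- m = w ⊕ m²
    (hsum : ∀ x ∈ m, ∃ u ∈ w, ∃ v ∈ sqIdeal m, x = u + v)
    (hint : ∀ u ∈ w, u ∈ sqIdeal m → u = 0)
    -- o is a cyclic vector: A·o = V
    (hcyc : ∀ v : Fin (2 * n + 2) → ℂ, ∃ S ∈ A, S.mulVec o = v)
    -- S is a basis of ker(ev), decomposed as S i = X i + Y i
    (S X Y : Fin k → Matrix (Fin (2 * n + 2)) (Fin (2 * n + 2)) ℂ)
    (hSm : ∀ i, S i ∈ m)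
    (hSker : ∀ i, (S i).mulVec o = 0)
    (hSli : LinearIndependent ℂ S)
    (hSspan : ∀ a ∈ A, a.mulVec o = 0 → a ∈ Submodule.span ℂ (Set.range S))
    (hX : ∀ i, X i ∈ w) (hY : ∀ i, Y i ∈ sqIdeal m)
    (hSXY : ∀ i, S i = X i + Y i) :
    LinearIndependent ℂ X ∧
    (∀ i j, X i * X j = X j * X i) ∧
    k ≤ n ∧
    Module.finrank ℂ ↥A ≤ 3 * n + 2 := by
  classical
  subst hAgen
  set A := Algebra.adjoin ℂ ((w : Set (Matrix (Fin (2 * n + 2)) (Fin (2 * n + 2)) ℂ)) ∪ {t})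
    with hA
  -- L1 : t almost-commutes with A through the scalar part
  have L1 : ∀ b ∈ A, ∃ β : ℂ, t * b = β • t ∧ b * t = β • t := by
    intro b hb
    obtain ⟨β, hβ⟩ := hdec b hb
    obtain ⟨h1, h2⟩ := ht _ hβ
    refine ⟨β, ?_, ?_⟩
    · rw [mul_sub, mul_smul_comm, mul_one, sub_eq_zero] at h1; exact h1
    · rw [sub_mul, smul_mul_assoc, one_mul, sub_eq_zero] at h2; exact h2
  -- L0 : elements of w almost-commute with A
  have L0 : ∀ u ∈ w, ∀ b ∈ A, ∃ c : ℂ, u * b - b * u = c • t := by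
    intro u hu b hb
    induction hb using Algebra.adjoin_induction with
    | mem g hg =>
      rcases hg with hgw | hgt
      · exact hbr u hu g hgw
      · simp only [Set.mem_singleton_iff] at hgt
        subst hgt
        obtain ⟨e1, e2⟩ := ht u (hwm hu)
        exact ⟨0, by rw [e1, e2, zero_smul, sub_self]⟩
    | algebraMap r =>
      exact ⟨0, by rw [zero_smul, sub_eq_zero, Algebra.commutes]⟩
    | add x y hx hy ihx ihy =>
      obtain ⟨c1, h1⟩ := ihx; obtain ⟨c2, h2⟩ := ihy
      exact ⟨c1 + c2, by rw [add_smul, ← h1, ← h2, mul_add, add_mul]; abel⟩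
    | mul x y hx hy ihx ihy =>
      obtain ⟨c1, h1⟩ := ihx; obtain ⟨c2, h2⟩ := ihy
      obtain ⟨β1, hβ1, hβ1'⟩ := L1 x hx
      obtain ⟨β2, hβ2, hβ2'⟩ := L1 y hy
      refine ⟨c1 * β2 + c2 * β1, ?_⟩
      have e : u * (x * y) - (x * y) * u
          = (u * x - x * u) * y + x * (u * y - y * u) := by noncomm_ring
      rw [e, h1, h2, smul_mul_assoc, hβ2, mul_smul_comm, hβ1', smul_smul, smul_smul, ← add_smul]
  -- L2 : any two elements of A almost-commute
  have L2 : ∀ a ∈ A, ∀ b ∈ A, ∃ c : ℂ, a * b - b * a = c • t := by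
    intro a ha
    induction ha using Algebra.adjoin_induction with
    | mem g hg =>
      rcases hg with hgw | hgt
      · exact L0 g hgw
      · simp only [Set.mem_singleton_iff] at hgt
        subst hgt
        intro b hb
        obtain ⟨β, h1, h2⟩ := L1 b hb
        exact ⟨0, by rw [h1, h2, zero_smul, sub_self]⟩
    | algebraMap r =>
      intro b hb
      exact ⟨0, by rw [zero_smul, sub_eq_zero, ← Algebra.commutes]⟩
    | add x y hx hy ihx ihy =>
      intro b hb
      obtain ⟨c1, h1⟩ := ihx b hb; obtain ⟨c2, h2⟩ := ihy b hb
      exact ⟨c1 + c2, by rw [add_smul, ← h1, ← h2, add_mul, mul_add]; abel⟩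
    | mul x y hx hy ihx ihy =>
      intro b hb
      obtain ⟨c1, h1⟩ := ihx b hb; obtain ⟨c2, h2⟩ := ihy b hb
      obtain ⟨α1, hα1, hα1'⟩ := L1 x hx
      obtain ⟨α2, hα2, hα2'⟩ := L1 y hy
      refine ⟨c2 * α1 + c1 * α2, ?_⟩
      have e : (x * y) * b - b * (x * y)
          = x * (y * b - b * y) + (x * b - b * x) * y := by noncomm_ring
      rw [e, h2, h1, mul_smul_comm, hα1', smul_mul_assoc, hα2, smul_smul, smul_smul, ← add_smul]
  -- L3 : m² is central in A
  have L3 : ∀ z ∈ sqIdeal m, ∀ b ∈ A, z * b = b * z := by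
    intro z hz
    induction hz using Submodule.span_induction with
    | mem a hain =>
      obtain ⟨x, hx, y, hy, rfl⟩ := hain
      intro b hb
      obtain ⟨c1, h1⟩ := L2 x (hmA x hx) b hb
      obtain ⟨c2, h2⟩ := L2 y (hmA y hy) b hb
      have e : (x * y) * b - b * (x * y)
          = x * (y * b - b * y) + (x * b - b * x) * y := by noncomm_ring
      have e0 : (x * y) * b - b * (x * y) = 0 := by
        rw [e, h2, h1, mul_smul_comm, (ht x hx).2, smul_mul_assoc, (ht y hy).1,
          smul_zero, smul_zero, add_zero]
      rw [← sub_eq_zero]; exact e0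
    | zero => intro b hb; simp
    | add x y hx hy ihx ihy =>
      intro b hb; rw [add_mul, mul_add, ihx b hb, ihy b hb]
    | smul a x hx ih =>
      intro b hb; rw [smul_mul_assoc, mul_smul_comm, ih b hb]
  -- m² ⊆ A
  have hsqA : ∀ z ∈ sqIdeal m, z ∈ A := by
    intro z hz
    have : sqIdeal m ≤ Subalgebra.toSubmodule A := by
      rw [sqIdeal, Submodule.span_le]
      rintro _ ⟨x, hx, y, hy, rfl⟩
      exact (Subalgebra.mem_toSubmodule A).mpr (mul_mem (hmA x hx) (hmA y hy))
    exact this hz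
  -- L4 : a central element of A killing o is zero
  have L4 : ∀ z, z ∈ A → (∀ b ∈ A, z * b = b * z) → z.mulVec o = 0 → z = 0 := by
    intro z hzA hzc hzo
    ext i j
    obtain ⟨P, hP, hPo⟩ := hcyc (Pi.single j 1)
    have h0 : z.mulVec (Pi.single j 1) = 0 := by
      rw [← hPo, Matrix.mulVec_mulVec, hzc P hP, ← Matrix.mulVec_mulVec, hzo, Matrix.mulVec_zero]
    have h2 := congrFun h0 i
    rw [Matrix.mulVec_single] at h2
    simpa using h2
  have hSA : ∀ i, S i ∈ A := fun i => hmA _ (hSm i)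
  have hXA : ∀ i, X i ∈ A := fun i => hmA _ (hwm (hX i))
  have hYA : ∀ i, Y i ∈ A := fun i => hsqA _ (hY i)
  -- linear independence of X
  have hXli : LinearIndependent ℂ X := by
    rw [Fintype.linearIndependent_iff]
    intro g hg
    have hz : (∑ i, g i • Y i) ∈ sqIdeal m :=
      Submodule.sum_mem _ fun i _ => Submodule.smul_mem _ _ (hY i)
    have hze : ∑ i, g i • S i = ∑ i, g i • Y i := by
      have e : ∑ i, g i • S i = ∑ i, g i • X i + ∑ i, g i • Y i := by
        rw [← Finset.sum_add_distrib]
        exact Finset.sum_congr rfl fun i _ => by rw [hSXY i, smul_add]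
      rw [e, hg, zero_add]
    have hzo : (∑ i, g i • S i).mulVec o = 0 := by
      let μ : Matrix (Fin (2 * n + 2)) (Fin (2 * n + 2)) ℂ →ₗ[ℂ] (Fin (2 * n + 2) → ℂ) :=
        { toFun := fun M => M.mulVec o
          map_add' := fun a b => Matrix.add_mulVec a b o
          map_smul' := fun c a => Matrix.smul_mulVec c a o }
      show μ (∑ i, g i • S i) = 0
      rw [map_sum]
      refine Finset.sum_eq_zero fun i _ => ?_
      rw [_root_.map_smul]
      show g i • (S i).mulVec o = 0
      rw [hSker, smul_zero]
    have hz0 : ∑ i, g i • S i = 0 := by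
      refine L4 _ (Subalgebra.sum_mem A fun i _ => Subalgebra.smul_mem A (hSA i) (g i)) ?_ hzo
      intro b hb
      rw [hze]
      exact L3 _ hz b hb
    exact Fintype.linearIndependent_iff.mp hSli g hz0
  -- pairwise commutation of the X i
  have hcomm : ∀ i j, X i * X j = X j * X i := by
    intro i j
    obtain ⟨c, hc⟩ := hbr (X i) (hX i) (X j) (hX j)
    have e1 : Y i * X j = X j * Y i := L3 _ (hY i) _ (hXA j)
    have e2 : Y j * X i = X i * Y j := L3 _ (hY j) _ (hXA i)
    have e3 : Y i * Y j = Y j * Y i := L3 _ (hY i) _ (hYA j)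
    have hSc : S i * S j - S j * S i = c • t := by
      rw [hSXY i, hSXY j]
      have e : (X i + Y i) * (X j + Y j) - (X j + Y j) * (X i + Y i)
          = (X i * X j - X j * X i) + (X i * Y j - Y j * X i)
            + (Y i * X j - X j * Y i) + (Y i * Y j - Y j * Y i) := by noncomm_ring
      rw [e, hc, sub_eq_zero.mpr e2.symm, sub_eq_zero.mpr e1, sub_eq_zero.mpr e3,
        add_zero, add_zero, add_zero]
    have hto : (c • t).mulVec o = 0 := by
      rw [← hSc, Matrix.sub_mulVec, ← Matrix.mulVec_mulVec, ← Matrix.mulVec_mulVec,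
        hSker i, hSker j, Matrix.mulVec_zero, Matrix.mulVec_zero, sub_self]
    have hct0 : c • t = 0 := by
      refine L4 _ (Subalgebra.smul_mem A (hmA t htm) c) ?_ hto
      intro b hb
      obtain ⟨β, h1, h2⟩ := L1 b hb
      rw [smul_mul_assoc, mul_smul_comm, h1, h2]
    rw [hct0] at hc
    exact sub_eq_zero.mp hc
  -- k ≤ n
  have hkn : k ≤ n := by
    by_cases htz : t = 0
    · rcases Nat.eq_zero_or_pos k with hk | hk
      · omega
      · exfalso
        refine hXli.ne_zero ⟨0, hk⟩ ?_
        refine hnd _ (hX _) fun y hy => ?_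
        obtain ⟨c, hc⟩ := hbr _ (hX ⟨0, hk⟩) y hy
        rw [htz, smul_zero] at hc
        exact hc
    · obtain ⟨i0, j0, ht0⟩ : ∃ i j, t i j ≠ 0 := by
        by_contra h
        push_neg at h
        exact htz (by ext i j; simpa using h i j)
      -- the linear functional recovering the coefficient of t
      let ℓL : Matrix (Fin (2 * n + 2)) (Fin (2 * n + 2)) ℂ →ₗ[ℂ] ℂ :=
        { toFun := fun M => M i0 j0 / t i0 j0
          map_add' := fun M N => by simp [Matrix.add_apply]; ring
          map_smul' := fun c M => by simp [Matrix.smul_apply]; ring }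
      have hℓt : ∀ c : ℂ, ℓL (c • t) = c := by
        intro c
        show (c • t) i0 j0 / t i0 j0 = c
        rw [Matrix.smul_apply, smul_eq_mul, mul_div_assoc, div_self ht0, mul_one]
      have L5 : ∀ x ∈ w, ∀ y ∈ w, x * y - y * x = ℓL (x * y - y * x) • t := by
        intro x hx y hy
        obtain ⟨c, hc⟩ := hbr x hx y hy
        rw [hc, hℓt]
      -- the symplectic form as a bilinear map
      let C : Matrix (Fin (2 * n + 2)) (Fin (2 * n + 2)) ℂ →ₗ[ℂ]
          Matrix (Fin (2 * n + 2)) (Fin (2 * n + 2)) ℂ →ₗ[ℂ]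
          Matrix (Fin (2 * n + 2)) (Fin (2 * n + 2)) ℂ :=
        LinearMap.mul ℂ _ - (LinearMap.mul ℂ _).flip
      let D := C.compr₂ ℓL
      have hD : ∀ x y, D x y = ℓL (x * y - y * x) := by
        intro x y
        simp [D, C, LinearMap.compr₂_apply, LinearMap.sub_apply, LinearMap.mul_apply',
          LinearMap.flip_apply]
      let Ψ : ↥w →ₗ[ℂ] Module.Dual ℂ ↥w := D.domRestrict₁₂ w w
      let Φ : ↥w →ₗ[ℂ] (Fin k → ℂ) :=
        LinearMap.pi fun i => (D.flip (X i)) ∘ₗ w.subtype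
      have hΦ : ∀ (u : ↥w) i, Φ u i = ℓL ((u : Matrix (Fin (2 * n + 2)) (Fin (2 * n + 2)) ℂ) * X i - X i * (u : Matrix (Fin (2 * n + 2)) (Fin (2 * n + 2)) ℂ)) := by
        intro u i
        show D.flip (X i) (u : Matrix (Fin (2 * n + 2)) (Fin (2 * n + 2)) ℂ) = _
        rw [LinearMap.flip_apply, hD]
      let X' : Fin k → ↥w := fun i => ⟨X i, hX i⟩
      have hX'li : LinearIndependent ℂ X' := by
        have e : (⇑w.subtype ∘ X') = X := rfl
        exact LinearIndependent.of_comp w.subtype (e ▸ hXli)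
      have hspan : Submodule.span ℂ (Set.range X') ≤ LinearMap.ker Φ := by
        rw [Submodule.span_le]
        rintro _ ⟨j, rfl⟩
        refine LinearMap.mem_ker.mpr (funext fun i => ?_)
        rw [hΦ]
        show ℓL (X j * X i - X i * X j) = 0
        rw [hcomm j i, sub_self, map_zero]
      have hΨ : ∀ (u v : ↥w), Ψ u v = ℓL ((u : Matrix (Fin (2 * n + 2)) (Fin (2 * n + 2)) ℂ) * (v : Matrix (Fin (2 * n + 2)) (Fin (2 * n + 2)) ℂ) - (v : Matrix (Fin (2 * n + 2)) (Fin (2 * n + 2)) ℂ) * (u : Matrix (Fin (2 * n + 2)) (Fin (2 * n + 2)) ℂ)) := by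
        intro u v
        show D (u : Matrix (Fin (2 * n + 2)) (Fin (2 * n + 2)) ℂ) (v : Matrix (Fin (2 * n + 2)) (Fin (2 * n + 2)) ℂ) = _
        rw [hD]
      have hΨinj : Function.Injective Ψ := by
        rw [injective_iff_map_eq_zero]
        intro u hu
        have hu0 : (u : Matrix (Fin (2 * n + 2)) (Fin (2 * n + 2)) ℂ) = 0 := by
          refine hnd _ u.2 fun y hy => ?_
          have h0 : ℓL ((u : Matrix (Fin (2 * n + 2)) (Fin (2 * n + 2)) ℂ) * y - y * (u : Matrix (Fin (2 * n + 2)) (Fin (2 * n + 2)) ℂ)) = 0 := by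
            have := congrArg (fun f => f ⟨y, hy⟩) (congrArg DFunLike.coe hu)
            simpa [hΨ] using this
          rw [L5 _ u.2 y hy, h0, zero_smul]
        exact Subtype.ext hu0
      have hΨsurj : Function.Surjective Ψ :=
        (LinearMap.injective_iff_surjective_of_finrank_eq_finrank
          (Subspace.dual_finrank_eq).symm).mp hΨinj
      have hΦsurj : Function.Surjective Φ := by
        intro a
        obtain ⟨f, hf⟩ : ∃ f : Module.Dual ℂ ↥w, ∀ i, f (X' i) = a i := by
          let b := Module.Basis.span hX'li
          obtain ⟨g, hg⟩ := LinearMap.exists_extend ((b.constr ℂ) a)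
          refine ⟨g, fun i => ?_⟩
          have hb : ((b i : ↥(Submodule.span ℂ (Set.range X'))) : ↥w) = X' i :=
            congrArg Subtype.val (Module.Basis.span_apply hX'li i)
          calc g (X' i) = g ((Submodule.span ℂ (Set.range X')).subtype (b i)) := by rw [← hb]; rfl
            _ = ((b.constr ℂ) a) (b i) := LinearMap.congr_fun hg (b i)
            _ = a i := b.constr_basis ℂ a i
        obtain ⟨u, hu⟩ := hΨsurj f
        refine ⟨u, funext fun i => ?_⟩
        have : Φ u i = Ψ u (X' i) := by rw [hΦ, hΨ]
        rw [this, hu, hf]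
      have h1 : Module.finrank ℂ ↥(LinearMap.range Φ) = k := by
        rw [LinearMap.range_eq_top.mpr hΦsurj, finrank_top]
        simp [Module.finrank_fin_fun]
      have h2 := LinearMap.finrank_range_add_finrank_ker Φ
      rw [h1, hwdim] at h2
      have h3 : k ≤ Module.finrank ℂ ↥(LinearMap.ker Φ) := by
        have e := finrank_span_eq_card hX'li
        rw [Fintype.card_fin] at e
        calc k = Module.finrank ℂ ↥(Submodule.span ℂ (Set.range X')) := e.symm
          _ ≤ _ := Submodule.finrank_mono hspan
      omega
  -- dimension bound on A
  refine ⟨hXli, hcomm, hkn, ?_⟩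
  haveI : FiniteDimensional ℂ ↥A :=
    inferInstanceAs (FiniteDimensional ℂ ↥(Subalgebra.toSubmodule A))
  let ev : ↥A →ₗ[ℂ] (Fin (2 * n + 2) → ℂ) :=
    { toFun := fun a => (a : Matrix (Fin (2 * n + 2)) (Fin (2 * n + 2)) ℂ).mulVec o
      map_add' := fun a b => by simp [Matrix.add_mulVec]
      map_smul' := fun c a => by simp [Matrix.smul_mulVec] }
  have h4 := LinearMap.finrank_range_add_finrank_ker ev
  have h5 : Module.finrank ℂ ↥(LinearMap.range ev) ≤ 2 * n + 2 := by
    refine le_trans (Submodule.finrank_le _) ?_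
    simp [Module.finrank_fin_fun]
  let S' : Fin k → ↥A := fun i => ⟨S i, hSA i⟩
  have h6 : Module.finrank ℂ ↥(LinearMap.ker ev) ≤ k := by
    have hker : LinearMap.ker ev ≤ Submodule.span ℂ (Set.range S') := by
      intro a ha
      have hao : (a : Matrix (Fin (2 * n + 2)) (Fin (2 * n + 2)) ℂ).mulVec o = 0 :=
        LinearMap.mem_ker.mp ha
      have h := hSspan (a : Matrix (Fin (2 * n + 2)) (Fin (2 * n + 2)) ℂ) a.2 hao
      have himg : Set.range S = (A.val.toLinearMap) '' Set.range S' := by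
        rw [← Set.range_comp]; rfl
      rw [himg, ← Submodule.map_span] at h
      obtain ⟨y, hy, hya⟩ := Submodule.mem_map.mp h
      have : y = a := Subtype.ext hya
      rwa [this] at hy
    calc Module.finrank ℂ ↥(LinearMap.ker ev)
        ≤ Module.finrank ℂ ↥(Submodule.span ℂ (Set.range S')) := Submodule.finrank_mono hker
      _ ≤ k := by
          refine le_trans (finrank_span_le_card _) ?_
          rw [Set.toFinset_range]
          exact le_trans Finset.card_image_le (by simp)
  omega
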